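/- Let Z be a positive integer, m a natural number, and A, q ≥ 0 real numbers with q·m ≤ 1/2. Let R : ℤ → ℝ satisfy R(s) ≥ 0 for all s and R(s) = 0 for all s ≤ 0. If R(z) ≤ A + q·∑_{r=1}^{m} R(z−r) for all integers z with 1 ≤ z ≤ Z, then ∑_{z=1}^{Z} R(z) ≤ 2·Z·A. -/

import Mathlib

lemma asyncHFL_shift_sum (Z : ℕ) (r : ℤ) (hr : 0 ≤ r) (R : ℤ → ℝ)
    (hRnn : ∀ s : ℤ, 0 ≤ R s) (hR0 : ∀ s : ℤ, s ≤ 0 → R s = 0) :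
    ∑ z ∈ Finset.Icc (1 : ℤ) Z, R (z - r) ≤ ∑ z ∈ Finset.Icc (1 : ℤ) Z, R z := by
  have h1 : ∑ z ∈ Finset.Icc (1 : ℤ) Z, R (z - r)
      = ∑ s ∈ Finset.Icc (1 - r) ((Z : ℤ) - r), R s := by
    refine Finset.sum_bij' (fun z _ => z - r) (fun s _ => s + r) ?_ ?_ ?_ ?_ ?_
    · intro z hz; rw [Finset.mem_Icc] at hz ⊢; omega
    · intro s hs; rw [Finset.mem_Icc] at hs ⊢; omega
    · intro z _; ring
    · intro s _; ring
    · intro z _; rfl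
  rw [h1]
  have h2 : ∑ s ∈ Finset.Icc (1 - r) ((Z : ℤ) - r), R s
      = ∑ s ∈ (Finset.Icc (1 - r) ((Z : ℤ) - r)).filter (fun s => 1 ≤ s), R s := by
    refine (Finset.sum_subset (Finset.filter_subset _ _) ?_).symm
    intro s hs hns
    simp only [Finset.mem_filter, Finset.mem_Icc, not_and, not_le] at hns hs
    exact hR0 s (by omega)
  rw [h2]
  refine Finset.sum_le_sum_of_subset_of_nonneg ?_ (fun s _ _ => hRnn s)
  intro s hs
  simp only [Finset.mem_filter, Finset.mem_Icc] at *
  omega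

theorem asyncHFL_sum_of_recursion
    (Z m : ℕ) (hZ : 1 ≤ Z) (A q : ℝ) (hA : 0 ≤ A) (hq : 0 ≤ q)
    (hqm : q * (m : ℝ) ≤ 1 / 2) (R : ℤ → ℝ)
    (hRnn : ∀ s : ℤ, 0 ≤ R s) (hR0 : ∀ s : ℤ, s ≤ 0 → R s = 0)
    (hrec : ∀ z : ℤ, 1 ≤ z → z ≤ (Z : ℤ) →
      R z ≤ A + q * ∑ r ∈ Finset.Icc 1 m, R (z - (r : ℤ))) :
    ∑ z ∈ Finset.Icc 1 Z, R (z : ℤ) ≤ 2 * (Z : ℝ) * A := by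
  -- rewrite ℕ-indexed sum as ℤ-indexed sum
  have hcast : ∀ f : ℤ → ℝ, ∑ z ∈ Finset.Icc 1 Z, f (z : ℤ)
      = ∑ z ∈ Finset.Icc (1 : ℤ) Z, f z := by
    intro f
    refine Finset.sum_bij' (fun z _ => (z : ℤ)) (fun s _ => s.toNat) ?_ ?_ ?_ ?_ ?_
    · intro z hz; rw [Finset.mem_Icc] at hz ⊢; omega
    · intro s hs; rw [Finset.mem_Icc] at hs ⊢; omega
    · intro z _; rfl
    · intro s hs; rw [Finset.mem_Icc] at hs; omega
    · intro z _; rfl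
  rw [hcast R]
  set S := ∑ z ∈ Finset.Icc (1 : ℤ) Z, R z with hS
  have hSnn : 0 ≤ S := Finset.sum_nonneg fun z _ => hRnn z
  have hstep : S ≤ (Z : ℝ) * A + q * ((m : ℝ) * S) := by
    calc S ≤ ∑ z ∈ Finset.Icc (1 : ℤ) Z,
            (A + q * ∑ r ∈ Finset.Icc 1 m, R (z - (r : ℤ))) := by
          refine Finset.sum_le_sum fun z hz => ?_
          simp only [Finset.mem_Icc] at hz
          exact hrec z hz.1 hz.2
      _ = (Z : ℝ) * A + q * ∑ r ∈ Finset.Icc 1 m,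
            ∑ z ∈ Finset.Icc (1 : ℤ) Z, R (z - (r : ℤ)) := by
          have hcard : (Finset.Icc (1 : ℤ) (Z : ℤ)).card = Z := by
            rw [Int.card_Icc]; omega
          rw [Finset.sum_add_distrib, Finset.sum_const, ← Finset.mul_sum,
            Finset.sum_comm, hcard, nsmul_eq_mul]
      _ ≤ (Z : ℝ) * A + q * ((m : ℝ) * S) := by
          gcongr
          calc ∑ r ∈ Finset.Icc 1 m, ∑ z ∈ Finset.Icc (1 : ℤ) Z, R (z - (r : ℤ))
              ≤ ∑ r ∈ Finset.Icc 1 m, S := by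
                refine Finset.sum_le_sum fun r hr => ?_
                exact asyncHFL_shift_sum Z r (by positivity) R hRnn hR0
            _ = (m : ℝ) * S := by
                rw [Finset.sum_const, Nat.card_Icc]; simp [nsmul_eq_mul]
  have : q * ((m : ℝ) * S) ≤ (1 / 2) * S := by
    rw [← mul_assoc]
    exact mul_le_mul_of_nonneg_right hqm hSnn
  linarith
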